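/- Let γ : [a,b] → ℝ^d be absolutely continuous and suppose that s ↦ ‖γ'(s)‖ log‖γ'(s)‖ is integrable on [a,b] (interpreting x log x as 0 at x = 0). Then ‖γ(t) − γ(a)‖ · log(1/(t−a)) → 0 as t ↓ a. -/

import Mathlib

open MeasureTheory

/-- If `γ : [a,b] → ℝ^d` is absolutely continuous (with derivative `γ'`) and
`s ↦ ‖γ'(s)‖ log ‖γ'(s)‖` is integrable on `[a,b]`, then
`‖γ(t) − γ(a)‖ · log(1/(t−a)) → 0` as `t ↓ a`. -/
theorem stmt5 (d : ℕ) (a b : ℝ) (hab : a < b)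
    (γ γ' : ℝ → EuclideanSpace ℝ (Fin d))
    (hint : IntegrableOn γ' (Set.Icc a b))
    (hγ : ∀ t ∈ Set.Icc a b, γ t = γ a + ∫ s in a..t, γ' s)
    (hlog : IntegrableOn (fun s => ‖γ' s‖ * Real.log ‖γ' s‖) (Set.Icc a b)) :
    Filter.Tendsto (fun t => ‖γ t - γ a‖ * Real.log (1 / (t - a)))
      (nhdsWithin a (Set.Ioi a)) (nhds 0) := by
  set g : ℝ → ℝ := fun s => ‖γ' s‖ * Real.log ‖γ' s‖ with hgdef
  set G : ℝ → ℝ := fun t => ∫ s in Set.Ioc a t, |g s| with hGdef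
  have hgi : IntegrableOn (fun s => |g s|) (Set.Icc a b) := hlog.abs
  -- G tends to 0 from the right
  have hGto : Filter.Tendsto G (nhdsWithin a (Set.Ioi a)) (nhds 0) := by
    have hc : ContinuousOn G (Set.Icc a b) :=
      intervalIntegral.continuousOn_primitive hgi
    have h0 : G a = 0 := by simp [hGdef]
    have := (hc a (Set.left_mem_Icc.2 hab.le)).tendsto
    rw [h0] at this
    refine this.mono_left ?_
    rw [← nhdsWithin_Ioo_eq_nhdsGT hab]
    exact nhdsWithin_mono _ Set.Ioo_subset_Icc_self
  -- the eventual set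
  have hmem : Set.Ioo a (min b (a + Real.exp (-2))) ∈ nhdsWithin a (Set.Ioi a) := by
    apply Ioo_mem_nhdsGT_of_mem
    constructor
    · exact le_refl a
    · exact lt_min hab (by linarith [Real.exp_pos (-2)])
  -- nonnegativity
  have hnonneg : ∀ᶠ t in nhdsWithin a (Set.Ioi a),
      0 ≤ ‖γ t - γ a‖ * Real.log (1 / (t - a)) := by
    filter_upwards [hmem] with t ht
    have h1 : 0 < t - a := by linarith [ht.1]
    have h2 : t - a ≤ 1 := by
      have := ht.2
      have he : Real.exp (-2) ≤ 1 := Real.exp_le_one_iff.2 (by norm_num)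
      have : t < a + Real.exp (-2) := lt_of_lt_of_le this (min_le_right _ _)
      linarith
    refine mul_nonneg (norm_nonneg _) (Real.log_nonneg ?_)
    rw [le_div_iff₀ h1]
    linarith
  -- upper bound
  have hupper : ∀ᶠ t in nhdsWithin a (Set.Ioi a),
      ‖γ t - γ a‖ * Real.log (1 / (t - a)) ≤
        Real.sqrt (t - a) * Real.log (1 / (t - a)) + 2 * G t := by
    filter_upwards [hmem] with t ht
    obtain ⟨hta, htb⟩ := ht
    have hle_b : t ≤ b := le_of_lt (lt_of_lt_of_le htb (min_le_left _ _))
    have hh : 0 < t - a := by linarith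
    set h : ℝ := t - a with hhdef
    have hhe : h < Real.exp (-2) := by
      have := lt_of_lt_of_le htb (min_le_right _ _); simp [hhdef]; linarith
    have hlogh : Real.log h < -2 := by
      calc Real.log h < Real.log (Real.exp (-2)) := Real.log_lt_log hh hhe
      _ = -2 := Real.log_exp _
    set K : ℝ := (Real.sqrt h)⁻¹ with hKdef
    have hsq : 0 < Real.sqrt h := Real.sqrt_pos.2 hh
    have hKpos : 0 < K := inv_pos.2 hsq
    have hlogK : Real.log K = -(Real.log h / 2) := by
      rw [hKdef, Real.log_inv, Real.log_sqrt hh.le]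
    have hlogK1 : 1 ≤ Real.log K := by rw [hlogK]; linarith
    have hlogKpos : 0 < Real.log K := lt_of_lt_of_le one_pos hlogK1
    -- pointwise bound
    have hpt : ∀ s, ‖γ' s‖ ≤ K + |g s| / Real.log K := by
      intro s
      rcases le_or_gt ‖γ' s‖ K with hc | hc
      · have : 0 ≤ |g s| / Real.log K := div_nonneg (abs_nonneg _) hlogKpos.le
        linarith
      · have hx : 0 < ‖γ' s‖ := lt_trans hKpos hc
        have hlx : Real.log K ≤ Real.log ‖γ' s‖ := Real.log_le_log hKpos hc.le
        have h1 : ‖γ' s‖ * Real.log K ≤ |g s| :=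
          le_trans (mul_le_mul_of_nonneg_left hlx hx.le) (le_abs_self _)
        have h3 : ‖γ' s‖ ≤ |g s| / Real.log K := (le_div_iff₀ hlogKpos).2 h1
        linarith [hKpos.le]
    -- integral bound
    have hF : ‖γ t - γ a‖ ≤ K * h + G t / Real.log K := by
      have hγt : γ t - γ a = ∫ s in a..t, γ' s := by
        rw [hγ t ⟨hta.le, hle_b⟩]; abel
      rw [hγt]
      have hsub : Set.Ioc a t ⊆ Set.Icc a b :=
        Set.Ioc_subset_Icc_self.trans (Set.Icc_subset_Icc le_rfl hle_b)
      have hfin0 : IntegrableOn (fun s => ‖γ' s‖) (Set.Icc a b) := hint.norm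
      have hfin : IntegrableOn (fun s => ‖γ' s‖) (Set.Ioc a t) := hfin0.mono_set hsub
      have hgin : IntegrableOn (fun s => K + |g s| / Real.log K) (Set.Ioc a t) := by
        refine (integrableOn_const measure_Ioc_lt_top.ne).add ?_
        exact ((hgi.mono_set hsub)).div_const _
      calc ‖∫ s in a..t, γ' s‖ ≤ ∫ s in a..t, ‖γ' s‖ :=
            intervalIntegral.norm_integral_le_integral_norm (le_of_lt hta)
        _ = ∫ s in Set.Ioc a t, ‖γ' s‖ := intervalIntegral.integral_of_le hta.le
        _ ≤ ∫ s in Set.Ioc a t, (K + |g s| / Real.log K) :=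
            setIntegral_mono_on hfin hgin measurableSet_Ioc (fun s _ => hpt s)
        _ = K * h + G t / Real.log K := by
            rw [integral_add (show Integrable (fun _ : ℝ => K) (volume.restrict (Set.Ioc a t)) from integrableOn_const measure_Ioc_lt_top.ne)
              ((hgi.mono_set hsub).div_const _)]
            rw [setIntegral_const, integral_div]
            rw [measureReal_def, Real.volume_Ioc, ENNReal.toReal_ofReal hh.le]
            rw [smul_eq_mul, mul_comm]
    -- multiply by log(1/h)
    have hL : Real.log (1 / h) = -Real.log h := by rw [one_div, Real.log_inv]
    have hLpos : 0 < Real.log (1 / h) := by rw [hL]; linarith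
    have step : ‖γ t - γ a‖ * Real.log (1 / h) ≤
        (K * h + G t / Real.log K) * Real.log (1 / h) :=
      mul_le_mul_of_nonneg_right hF hLpos.le
    refine le_trans step (le_of_eq ?_)
    have hKh : K * h = Real.sqrt h := by
      rw [hKdef, inv_mul_eq_div, Real.div_sqrt]
    have hGt : 0 ≤ G t := setIntegral_nonneg measurableSet_Ioc fun s _ => abs_nonneg _
    have hratio : Real.log (1 / h) / Real.log K = 2 := by
      have hne : Real.log h ≠ 0 := by linarith
      rw [hL, hlogK]
      field_simp
    rw [add_mul, hKh]
    congr 1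
    rw [div_mul_eq_mul_div, mul_comm, ← div_mul_eq_mul_div, hratio, mul_comm]
  -- bound tends to 0
  have hbound : Filter.Tendsto
      (fun t => Real.sqrt (t - a) * Real.log (1 / (t - a)) + 2 * G t)
      (nhdsWithin a (Set.Ioi a)) (nhds 0) := by
    have h2G : Filter.Tendsto (fun t => 2 * G t) (nhdsWithin a (Set.Ioi a)) (nhds 0) := by
      simpa using hGto.const_mul 2
    have hsub : Filter.Tendsto (fun t => t - a) (nhdsWithin a (Set.Ioi a))
        (nhdsWithin 0 (Set.Ioi 0)) := by
      have hc : Filter.Tendsto (fun t => t - a) (nhds a) (nhds 0) := by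
        have := (continuous_sub_right a).tendsto a
        rwa [sub_self] at this
      refine tendsto_nhdsWithin_of_tendsto_nhds_of_eventually_within _
        (hc.mono_left nhdsWithin_le_nhds) ?_
      exact eventually_mem_nhdsWithin.mono fun x hx => Set.mem_Ioi.2 (sub_pos.2 hx)
    have hsl : Filter.Tendsto (fun h : ℝ => Real.sqrt h * Real.log (1 / h))
        (nhdsWithin 0 (Set.Ioi 0)) (nhds 0) := by
      have := (tendsto_log_mul_rpow_nhdsGT_zero (r := 1/2) (by norm_num)).neg
      rw [neg_zero] at this
      refine this.congr' ?_
      filter_upwards [self_mem_nhdsWithin] with x hx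
      have hx0 : (0:ℝ) < x := hx
      rw [Real.log_div one_ne_zero hx0.ne', Real.log_one, Real.sqrt_eq_rpow]
      ring
    have := (hsl.comp hsub).add h2G
    simpa using this
  exact squeeze_zero' hnonneg hupper hbound
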